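/- Every cellular automaton is Lipschitz (in fact uniformly continuous) with respect to the Besicovitch pseudo-distance: if F has radius r, then d_B(F(x), F(y)) ≤ (2r+1)·d_B(x,y). -/

import Mathlib

open Filter

/-- The Besicovitch pseudo-distance on `A^ℤ`. -/
noncomputable def besicovitchDist {A : Type*} [DecidableEq A] (x y : ℤ → A) : ℝ :=
  limsup (fun n : ℕ =>
    (((Finset.Icc (-(n : ℤ)) (n : ℤ)).filter (fun i => x i ≠ y i)).card : ℝ)
      / (2 * (n : ℝ) + 1)) atTop

/-- The cellular automaton of radius `r` with local rule `g`. -/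
def cellularAutomaton {A : Type*} (r : ℕ) (g : (Fin (2 * r + 1) → A) → A)
    (x : ℤ → A) : ℤ → A :=
  fun i => g (fun j => x (i + (j : ℤ) - (r : ℤ)))

section Aux

variable {A : Type*} [DecidableEq A]

/-- Combinatorial core: the differences of the CA images in `[-n,n]` are covered, with
multiplicity at most `2r+1`, by differences of `x, y` in `[-(n+r), n+r]`. -/
lemma CA_card_le {A : Type*} [DecidableEq A] (r : ℕ)
    (g : (Fin (2 * r + 1) → A) → A) (x y : ℤ → A) (n : ℕ) :
    ((Finset.Icc (-(n : ℤ)) (n : ℤ)).filter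
        (fun i => cellularAutomaton r g x i ≠ cellularAutomaton r g y i)).card
      ≤ (2 * r + 1) *
        ((Finset.Icc (-((n + r : ℕ) : ℤ)) ((n + r : ℕ) : ℤ)).filter
          (fun i => x i ≠ y i)).card := by
  classical
  set w : ℤ → ℤ := fun i =>
    if h : ∃ j : Fin (2 * r + 1), x (i + (j : ℤ) - (r : ℤ)) ≠ y (i + (j : ℤ) - (r : ℤ)) then
      i + ((h.choose : ℕ) : ℤ) - (r : ℤ) else i with hw
  have hex : ∀ i : ℤ, cellularAutomaton r g x i ≠ cellularAutomaton r g y i →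
      ∃ j : Fin (2 * r + 1), x (i + (j : ℤ) - (r : ℤ)) ≠ y (i + (j : ℤ) - (r : ℤ)) := by
    intro i hi
    by_contra h
    push_neg at h
    apply hi
    unfold cellularAutomaton
    congr 1
    funext j
    exact h j
  apply Finset.card_le_mul_card_image_of_maps_to (f := w)
  · intro i hi
    simp only [Finset.mem_filter, Finset.mem_Icc] at hi ⊢
    obtain ⟨⟨hi1, hi2⟩, hne⟩ := hi
    have h := hex i hne
    have hwd : w i = i + ((h.choose : ℕ) : ℤ) - (r : ℤ) := dif_pos h
    have hj : ((h.choose : ℕ) : ℤ) ≤ 2 * r := by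
      have := h.choose.isLt
      omega
    refine ⟨⟨by push_cast; omega, by push_cast; omega⟩, ?_⟩
    rw [hwd]; exact h.choose_spec
  · intro b _
    have hsub : ((Finset.Icc (-(n : ℤ)) (n : ℤ)).filter
        (fun i => cellularAutomaton r g x i ≠ cellularAutomaton r g y i)).filter
          (fun a => w a = b) ⊆ Finset.Icc (b - r) (b + r) := by
      intro a ha
      simp only [Finset.mem_filter, Finset.mem_Icc] at ha ⊢
      obtain ⟨⟨_, hne⟩, hwa⟩ := ha
      have h := hex a hne
      have hwd : w a = a + ((h.choose : ℕ) : ℤ) - (r : ℤ) := dif_pos h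
      have hj : ((h.choose : ℕ) : ℤ) ≤ 2 * r := by
        have := h.choose.isLt; omega
      have hj0 : (0 : ℤ) ≤ ((h.choose : ℕ) : ℤ) := Int.natCast_nonneg _
      rw [hwd] at hwa
      omega
    calc (((Finset.Icc (-(n : ℤ)) (n : ℤ)).filter
        (fun i => cellularAutomaton r g x i ≠ cellularAutomaton r g y i)).filter
          (fun a => w a = b)).card
        ≤ (Finset.Icc (b - r) (b + r)).card := Finset.card_le_card hsub
      _ = 2 * r + 1 := by rw [Int.card_Icc]; omega

end Aux

theorem CA_lipschitz_besicovitch {A : Type*} [DecidableEq A] (r : ℕ)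
    (g : (Fin (2 * r + 1) → A) → A) (x y : ℤ → A) :
    besicovitchDist (cellularAutomaton r g x) (cellularAutomaton r g y)
      ≤ (2 * (r : ℝ) + 1) * besicovitchDist x y := by
  classical
  unfold besicovitchDist
  set b : ℕ → ℝ := fun n =>
    (((Finset.Icc (-(n : ℤ)) (n : ℤ)).filter (fun i => x i ≠ y i)).card : ℝ)
      / (2 * (n : ℝ) + 1) with hb
  set u : ℕ → ℝ := fun n =>
    (((Finset.Icc (-(n : ℤ)) (n : ℤ)).filter
        (fun i => cellularAutomaton r g x i ≠ cellularAutomaton r g y i)).card : ℝ)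
      / (2 * (n : ℝ) + 1) with hu
  have hcard : ∀ n : ℕ, ∀ p : ℤ → Prop, ∀ _ : DecidablePred p,
      (((Finset.Icc (-(n : ℤ)) (n : ℤ)).filter p).card : ℝ) ≤ 2 * n + 1 := by
    intro n p hp
    have h1 : ((Finset.Icc (-(n : ℤ)) (n : ℤ)).filter p).card
        ≤ (Finset.Icc (-(n : ℤ)) (n : ℤ)).card :=
      Finset.card_le_card (Finset.filter_subset _ _)
    rw [Int.card_Icc] at h1
    have h2 : ((Finset.Icc (-(n : ℤ)) (n : ℤ)).filter p).card ≤ 2 * n + 1 := by omega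
    exact_mod_cast h2
  have hbnn : ∀ n, 0 ≤ b n := fun n => by
    apply div_nonneg (Nat.cast_nonneg _); positivity
  have hble : ∀ n, b n ≤ 1 := fun n => by
    rw [hb, div_le_one (by positivity)]; exact hcard n _ _
  have hunn : ∀ n, 0 ≤ u n := fun n => by
    apply div_nonneg (Nat.cast_nonneg _); positivity
  -- the two auxiliary sequences
  set w1 : ℕ → ℝ := fun n => (2 * r + 1) * b (n + r) with hw1
  set w2 : ℕ → ℝ := fun n => (2 * r + 1) * (2 * r) / (2 * n + 1) with hw2
  -- pointwise bound
  have hpoint : ∀ n, u n ≤ (w1 + w2) n := by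
    intro n
    have hN : (0:ℝ) < 2 * n + 1 := by positivity
    have hM : (0:ℝ) < 2 * ((n + r : ℕ) : ℝ) + 1 := by positivity
    have h1 : (((Finset.Icc (-(n : ℤ)) (n : ℤ)).filter
        (fun i => cellularAutomaton r g x i ≠ cellularAutomaton r g y i)).card : ℝ)
        ≤ (2 * r + 1) *
          (((Finset.Icc (-((n + r : ℕ) : ℤ)) ((n + r : ℕ) : ℤ)).filter
            (fun i => x i ≠ y i)).card : ℝ) := by
      have := CA_card_le r g x y n
      exact_mod_cast this
    set Dn : ℝ := (((Finset.Icc (-((n + r : ℕ) : ℤ)) ((n + r : ℕ) : ℤ)).filter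
        (fun i => x i ≠ y i)).card : ℝ) with hDn
    have h2 : u n ≤ (2 * r + 1) * Dn / (2 * n + 1) :=
      div_le_div_of_nonneg_right h1 hN.le
    refine h2.trans ?_
    show (2 * r + 1) * Dn / (2 * n + 1)
        ≤ (2 * r + 1) * (Dn / (2 * ((n + r : ℕ) : ℝ) + 1)) + (2 * r + 1) * (2 * r) / (2 * n + 1)
    have hDM : Dn ≤ 2 * ((n + r : ℕ) : ℝ) + 1 := hcard (n + r) _ _
    have hD0 : (0:ℝ) ≤ Dn := Nat.cast_nonneg _
    have hcast : ((n + r : ℕ) : ℝ) = (n : ℝ) + r := by push_cast; ring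
    rw [← sub_nonneg]
    have key : (2 * r + 1) * (Dn / (2 * ((n + r : ℕ) : ℝ) + 1)) + (2 * r + 1) * (2 * r) / (2 * n + 1)
        - (2 * r + 1) * Dn / (2 * n + 1)
        = (2 * r + 1) * ((2 * ((n + r : ℕ) : ℝ) + 1 - Dn) * (2 * r))
            / ((2 * ((n + r : ℕ) : ℝ) + 1) * (2 * n + 1)) := by
      field_simp
      rw [hcast]; ring
    rw [key]
    have hnum : (0:ℝ) ≤ 2 * ((n + r : ℕ) : ℝ) + 1 - Dn := by linarith
    apply div_nonneg _ (by positivity)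
    positivity
  -- boundedness facts
  have hw1nn : ∀ n, 0 ≤ w1 n := fun n => by
    rw [hw1]; exact mul_nonneg (by positivity) (hbnn _)
  have hw1le : ∀ n, w1 n ≤ 2 * r + 1 := fun n => by
    rw [hw1]
    calc (2 * (r:ℝ) + 1) * b (n + r) ≤ (2 * r + 1) * 1 :=
          mul_le_mul_of_nonneg_left (hble _) (by positivity)
      _ = 2 * r + 1 := mul_one _
  have hw2nn : ∀ n, 0 ≤ w2 n := fun n => by rw [hw2]; positivity
  have hw2le : ∀ n, w2 n ≤ (2 * r + 1) * (2 * r) := fun n => by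
    rw [hw2]
    apply div_le_self (by positivity)
    have : (0:ℝ) ≤ (n:ℝ) := Nat.cast_nonneg n
    linarith
  -- step 1 : limsup u ≤ limsup (w1 + w2)
  have step1 : limsup u atTop ≤ limsup (w1 + w2) atTop := by
    refine limsup_le_limsup (Eventually.of_forall hpoint) ?_ ?_
    · exact isCoboundedUnder_le_of_le atTop hunn
    · exact isBoundedUnder_of ⟨(2 * r + 1) + (2 * r + 1) * (2 * r),
        fun n => add_le_add (hw1le n) (hw2le n)⟩
  -- step 2 : limsup (w1 + w2) ≤ limsup w1 + limsup w2
  have bw1 : IsBoundedUnder (· ≤ ·) atTop w1 := isBoundedUnder_of ⟨2 * r + 1, hw1le⟩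
  have bw1' : IsBoundedUnder (· ≥ ·) atTop w1 := isBoundedUnder_of ⟨0, hw1nn⟩
  have bw2 : IsBoundedUnder (· ≤ ·) atTop w2 :=
    isBoundedUnder_of ⟨(2 * r + 1) * (2 * r), hw2le⟩
  have step2 : limsup (w1 + w2) atTop ≤ limsup w1 atTop + limsup w2 atTop :=
    limsup_add_le bw1' bw1 (isCoboundedUnder_le_of_le atTop hw2nn) bw2
  -- limsup w2 = 0
  have htend : Tendsto w2 atTop (nhds 0) := by
    have h1 : Tendsto (fun n : ℕ => 2 * (n:ℝ) + 1) atTop atTop := by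
      apply tendsto_atTop_add_const_right
      exact (tendsto_natCast_atTop_atTop).const_mul_atTop two_pos
    have h2 : Tendsto (fun n : ℕ => (2 * (n:ℝ) + 1)⁻¹) atTop (nhds 0) :=
      h1.inv_tendsto_atTop
    have h3 := h2.const_mul ((2 * (r:ℝ) + 1) * (2 * r))
    rw [mul_zero] at h3
    refine h3.congr fun n => (div_eq_mul_inv _ _).symm
  have hlim2 : limsup w2 atTop = 0 := htend.limsup_eq
  -- limsup w1 = (2r+1) * limsup b
  have hmono : Monotone (fun t : ℝ => (2 * (r:ℝ) + 1) * t) :=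
    fun s t h => mul_le_mul_of_nonneg_left h (by positivity)
  have hlim1 : (2 * (r:ℝ) + 1) * limsup (fun n => b (n + r)) atTop = limsup w1 atTop := by
    refine hmono.map_limsup_of_continuousAt (a := fun n => b (n + r)) ?_ ?_ ?_
    · exact (continuous_const.mul continuous_id).continuousAt
    · exact isBoundedUnder_of ⟨1, fun n => hble _⟩
    · exact isCoboundedUnder_le_of_le atTop fun n => hbnn _
  have hshift : limsup (fun n => b (n + r)) atTop = limsup b atTop := limsup_nat_add b r
  calc limsup u atTop ≤ limsup w1 atTop + limsup w2 atTop := step1.trans step2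
    _ = (2 * (r:ℝ) + 1) * limsup b atTop := by rw [hlim2, ← hlim1, hshift, add_zero]
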